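/- Let C̃ be obtained from a CSS code C by the full X-type generator splitting procedure. Then the number of logical qubits is unchanged: K̃ = K, where K = N − rank(H_X) − rank(H_Z) and K̃ = Ñ − rank(H̃_X) − rank(H̃_Z). -/

import Mathlib

open Matrix

/-- The weight of a vector over `F₂`: the number of nonzero entries. -/
def wt {α : Type*} [Fintype α] (v : α → ZMod 2) : ℕ :=
  (Finset.univ.filter fun j => v j ≠ 0).card

/-- Maximum weight of a row of a matrix over `F₂`. -/
def maxRowW {m α : Type*} [Fintype m] [Fintype α] (M : Matrix m α (ZMod 2)) : ℕ :=
  Finset.univ.sup fun i => wt (M i)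

/-- Maximum weight of a column of a matrix over `F₂`. -/
def maxColW {m α : Type*} [Fintype m] [Fintype α] (M : Matrix m α (ZMod 2)) : ℕ :=
  Finset.univ.sup fun j => wt fun i => M i j

/-- Total number of nonzero entries of a matrix over `F₂`. -/
def totW {m α : Type*} [Fintype m] [Fintype α] (M : Matrix m α (ZMod 2)) : ℕ :=
  ∑ i, wt (M i)

variable {N nX nZ : ℕ}

/-- Qubits of the code obtained by the full X-type generator splitting procedure:
the original `N` qubits, plus, for each row of `HX` of weight `w ≥ 4` (a "heavy" row),
cut qubits `(1),…,(w−3)` (0-indexed below). -/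
abbrev SplitQ (HX : Matrix (Fin nX) (Fin N) (ZMod 2)) : Type :=
  Fin N ⊕ Σ i : {i : Fin nX // 4 ≤ wt (HX i)}, Fin (wt (HX i.1) - 3)

/-- X-type generators of the fully split code: the rows of `HX` of weight `≤ 3`,
plus, for each heavy row, the `w−2` rows created by splitting it. -/
abbrev SplitXIdx (HX : Matrix (Fin nX) (Fin N) (ZMod 2)) : Type :=
  {i : Fin nX // ¬ 4 ≤ wt (HX i)} ⊕ Σ i : {i : Fin nX // 4 ≤ wt (HX i)}, Fin (wt (HX i.1) - 2)

/-- X-type generator matrix of the code `C̃` obtained from `C` by applying the X-type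
generator splitting step once to each row of `HX` of weight at least 4 (the result is the
same in any order).  Here `q i` enumerates, in a fixed order, the support of the heavy
row `i`.  Splitting a heavy row with support `{q₁,…,q_w}` produces `w−2` rows with
supports `{q₁,q₂,(1)}`, `{(m),q_{m+2},(m+1)}` for `m = 1,…,w−4`, and `{(w−3),q_{w−1},q_w}`,
on the original qubits together with that row's own cut qubits. -/
def splitHX (HX : Matrix (Fin nX) (Fin N) (ZMod 2))
    (q : ∀ i : {i : Fin nX // 4 ≤ wt (HX i)}, Fin (wt (HX i.1)) → Fin N) :
    Matrix (SplitXIdx HX) (SplitQ HX) (ZMod 2) := fun r j =>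
  match r, j with
  | Sum.inl i, Sum.inl p => HX i.1 p
  | Sum.inl _, Sum.inr _ => 0
  | Sum.inr ⟨i, r⟩, Sum.inl p =>
      have hw : 4 ≤ wt (HX i.1) := i.2
      if (r.val = 0 ∧ (p = q i ⟨0, by omega⟩ ∨ p = q i ⟨1, by omega⟩)) ∨
         (1 ≤ r.val ∧ r.val ≤ wt (HX i.1) - 4 ∧
           p = q i ⟨r.val + 1, by have := r.isLt; omega⟩) ∨
         (r.val = wt (HX i.1) - 3 ∧
           (p = q i ⟨wt (HX i.1) - 2, by omega⟩ ∨ p = q i ⟨wt (HX i.1) - 1, by omega⟩))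
      then 1 else 0
  | Sum.inr ⟨i, r⟩, Sum.inr ⟨i', c⟩ =>
      if i' = i ∧ (c.val = r.val ∨ c.val + 1 = r.val) then 1 else 0

/-- Z-type generator matrix of the code `C̃` obtained from `C` by the full X-type generator
splitting procedure: each row `R` of `HZ` agrees with `R` on the original qubits, and its
entry at the cut qubit `(m)` of heavy row `i` is the parity of
`|supp(R) ∩ {q_{i,1},…,q_{i,m+1}}|`. -/
def splitHZ (HX : Matrix (Fin nX) (Fin N) (ZMod 2)) (HZ : Matrix (Fin nZ) (Fin N) (ZMod 2))
    (q : ∀ i : {i : Fin nX // 4 ≤ wt (HX i)}, Fin (wt (HX i.1)) → Fin N) :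
    Matrix (Fin nZ) (SplitQ HX) (ZMod 2) := fun R j =>
  match j with
  | Sum.inl p => HZ R p
  | Sum.inr ⟨i, m⟩ => ∑ a : Fin (wt (HX i.1)), if a.val ≤ m.val + 1 then HZ R (q i a) else 0

set_option maxHeartbeats 1000000
set_option synthInstance.maxHeartbeats 400000

-- AUX SECTION
section Aux

variable (HX : Matrix (Fin nX) (Fin N) (ZMod 2)) (HZ : Matrix (Fin nZ) (Fin N) (ZMod 2))
  (q : ∀ i : {i : Fin nX // 4 ≤ wt (HX i)}, Fin (wt (HX i.1)) → Fin N)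

abbrev Cuts : Type := Σ i : {i : Fin nX // 4 ≤ wt (HX i)}, Fin (wt (HX i.1) - 3)

/-- extension by zero -/
def iotaL : (Fin N → ZMod 2) →ₗ[ZMod 2] (SplitQ HX → ZMod 2) where
  toFun f := Sum.elim f 0
  map_add' f g := by ext j; cases j <;> simp
  map_smul' c f := by ext j; cases j <;> simp

lemma iotaL_inj : Function.Injective (iotaL (N := N) HX) := by
  intro f g h
  funext p
  exact congrFun h (Sum.inl p)

/-- projection to cut coordinates -/
def piL : (SplitQ HX → ZMod 2) →ₗ[ZMod 2] (Cuts HX → ZMod 2) where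
  toFun f c := f (Sum.inr c)
  map_add' f g := rfl
  map_smul' c f := rfl

lemma piL_iotaL (f : Fin N → ZMod 2) : piL HX (iotaL HX f) = 0 := rfl

/-- key computational lemma: the rows of a heavy block sum to the original row -/
lemma sum_block (hinj : ∀ i, Function.Injective (q i))
    (hrange : ∀ i p, HX i.1 p ≠ 0 ↔ p ∈ Set.range (q i))
    (i : {i : Fin nX // 4 ≤ wt (HX i)}) :
    ∑ r : Fin (wt (HX i.1) - 2), splitHX HX q (Sum.inr ⟨i, r⟩) = iotaL HX (HX i.1) := by
  have hw : 4 ≤ wt (HX i.1) := i.2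
  funext j
  rw [Finset.sum_apply]
  cases j with
  | inr c =>
    obtain ⟨i', c⟩ := c
    show (∑ r : Fin (wt (HX i.1) - 2),
        if i' = i ∧ (c.val = r.val ∨ c.val + 1 = r.val) then (1:ZMod 2) else 0) = 0
    by_cases hi : i' = i
    · subst hi
      have hw2 : 4 ≤ wt (HX i'.1) := i'.2
      have hcv := c.isLt
      have key : ∀ r : Fin (wt (HX i'.1) - 2),
          (if i' = i' ∧ (c.val = r.val ∨ c.val + 1 = r.val) then (1:ZMod 2) else 0)
          = (if r = (⟨c.val, by omega⟩ : Fin (wt (HX i'.1) - 2)) then 1 else 0)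
            + (if r = (⟨c.val + 1, by omega⟩ : Fin (wt (HX i'.1) - 2)) then 1 else 0) := by
        intro r
        rcases eq_or_ne r (⟨c.val, by omega⟩ : Fin (wt (HX i'.1) - 2)) with h1 | h1 <;>
          rcases eq_or_ne r (⟨c.val + 1, by omega⟩ : Fin (wt (HX i'.1) - 2)) with h2 | h2
        · exfalso
          rw [h1] at h2
          simp [Fin.ext_iff] at h2
        · rw [h1]
          simp [Fin.ext_iff]
        · rw [h2]
          simp [Fin.ext_iff]
        · rw [if_neg h1, if_neg h2, if_neg, add_zero]
          rintro ⟨-, h | h⟩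
          · exact h1 (Fin.ext h.symm)
          · exact h2 (Fin.ext h.symm)
      rw [Finset.sum_congr rfl fun r _ => key r, Finset.sum_add_distrib,
        Finset.sum_ite_eq' (Finset.univ : Finset (Fin (wt (HX i'.1) - 2)))
          (⟨c.val, by omega⟩ : Fin (wt (HX i'.1) - 2)) (fun _ => (1:ZMod 2)),
        Finset.sum_ite_eq' (Finset.univ : Finset (Fin (wt (HX i'.1) - 2)))
          (⟨c.val + 1, by omega⟩ : Fin (wt (HX i'.1) - 2)) (fun _ => (1:ZMod 2))]
      simp only [Finset.mem_univ, if_true]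
      decide
    · simp [hi]
  | inl p =>
    show (∑ r : Fin (wt (HX i.1) - 2), splitHX HX q (Sum.inr ⟨i, r⟩) (Sum.inl p)) = HX i.1 p
    by_cases h0 : HX i.1 p = 0
    · rw [h0]
      refine Finset.sum_eq_zero fun r _ => ?_
      have hnr : ¬ p ∈ Set.range (q i) := fun h => ((hrange i p).2 h) h0
      simp only [splitHX]
      rw [if_neg]
      rintro (⟨-, h | h⟩ | ⟨-, -, h⟩ | ⟨-, h | h⟩) <;> exact hnr ⟨_, h.symm⟩
    · have h1 : HX i.1 p = 1 := by
        have h2 : ∀ x : ZMod 2, x ≠ 0 → x = 1 := by decide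
        exact h2 _ h0
      rw [h1]
      obtain ⟨a, ha⟩ := (hrange i p).1 h0
      have hq : ∀ x : Fin (wt (HX i.1)), (p = q i x) ↔ (a.val = x.val) := by
        intro x
        rw [← ha, (hinj i).eq_iff, Fin.ext_iff]
      have halt := a.isLt
      refine Eq.trans (Finset.sum_congr rfl fun r _ => ?_)
        ((Finset.sum_ite_eq' Finset.univ
          (⟨if a.val ≤ 1 then 0 else if a.val ≤ wt (HX i.1) - 3 then a.val - 1
              else wt (HX i.1) - 3,
            by split_ifs <;> omega⟩ : Fin (wt (HX i.1) - 2)) fun _ => (1:ZMod 2)).trans (by simp))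
      simp only [splitHX]
      refine if_congr ?_ rfl rfl
      simp only [hq]
      rw [Fin.ext_iff]
      have hr := r.isLt
      show _ ↔ r.val = if a.val ≤ 1 then 0 else if a.val ≤ wt (HX i.1) - 3 then a.val - 1
          else wt (HX i.1) - 3
      split_ifs <;> omega


lemma rank_eq_row_span {m n : Type*} [Fintype m] [Fintype n]
    (A : Matrix m n (ZMod 2)) :
    A.rank = Module.finrank (ZMod 2) (Submodule.span (ZMod 2) (Set.range A)) := by
  rw [← Matrix.rank_transpose A, Matrix.rank_eq_finrank_span_cols, Matrix.col_transpose]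
  rfl

/-- each original row, extended by zero, lies in the row span of the split matrix -/
lemma iota_row_mem (hinj : ∀ i, Function.Injective (q i))
    (hrange : ∀ i p, HX i.1 p ≠ 0 ↔ p ∈ Set.range (q i)) (i : Fin nX) :
    iotaL HX (HX i) ∈ Submodule.span (ZMod 2) (Set.range (splitHX HX q)) := by
  by_cases hi : 4 ≤ wt (HX i)
  · rw [← sum_block HX q hinj hrange ⟨i, hi⟩]
    exact Submodule.sum_mem _ fun r _ => Submodule.subset_span ⟨Sum.inr ⟨⟨i, hi⟩, r⟩, rfl⟩
  · have h : iotaL HX (HX i) = splitHX HX q (Sum.inl ⟨i, hi⟩) := by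
      funext j; cases j <;> rfl
    rw [h]
    exact Submodule.subset_span ⟨_, rfl⟩

lemma cuts_mk_eq {i i' : {i : Fin nX // 4 ≤ wt (HX i)}} {c : Fin (wt (HX i.1) - 3)}
    {c' : Fin (wt (HX i'.1) - 3)} :
    (⟨i, c⟩ : Cuts HX) = ⟨i', c'⟩ ↔ i = i' ∧ (c : ℕ) = (c' : ℕ) := by
  rw [Sigma.ext_iff]
  constructor
  · rintro ⟨h1, h2⟩
    subst h1
    rw [heq_eq_eq] at h2
    exact ⟨rfl, congrArg Fin.val h2⟩
  · rintro ⟨rfl, h⟩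
    exact ⟨rfl, heq_of_eq (Fin.ext h)⟩

lemma single_mem_map (i : {i : Fin nX // 4 ≤ wt (HX i)}) (c : Fin (wt (HX i.1) - 3)) :
    Pi.single (⟨i, c⟩ : Cuts HX) (1 : ZMod 2) ∈
      Submodule.map (piL HX) (Submodule.span (ZMod 2) (Set.range (splitHX HX q))) := by
  have main : ∀ n (i : {i : Fin nX // 4 ≤ wt (HX i)}) (c : Fin (wt (HX i.1) - 3)),
      c.val = n → Pi.single (⟨i, c⟩ : Cuts HX) (1 : ZMod 2) ∈
        Submodule.map (piL HX) (Submodule.span (ZMod 2) (Set.range (splitHX HX q))) := by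
    intro n
    induction n with
    | zero =>
      intro i c hc
      have hw := i.2
      refine ⟨splitHX HX q (Sum.inr ⟨i, ⟨0, by omega⟩⟩),
        Submodule.subset_span ⟨_, rfl⟩, ?_⟩
      funext d
      obtain ⟨i', c'⟩ := d
      show (if i' = i ∧ (c'.val = (0:ℕ) ∨ c'.val + 1 = (0:ℕ)) then (1:ZMod 2) else 0) = _
      rw [Pi.single_apply]
      refine if_congr ?_ rfl rfl
      rw [cuts_mk_eq]
      constructor
      · rintro ⟨h1, h2⟩
        exact ⟨h1, by omega⟩
      · rintro ⟨h1, h2⟩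
        exact ⟨h1, by omega⟩
    | succ n ih =>
      intro i c hc
      have hw := i.2
      have hlt := c.isLt
      have hrow : piL HX (splitHX HX q (Sum.inr ⟨i, ⟨c.val, by omega⟩⟩)) ∈
          Submodule.map (piL HX) (Submodule.span (ZMod 2) (Set.range (splitHX HX q))) :=
        ⟨_, Submodule.subset_span ⟨_, rfl⟩, rfl⟩
      have hprev := ih i ⟨n, by omega⟩ rfl
      have heq : Pi.single (⟨i, c⟩ : Cuts HX) (1 : ZMod 2)
          = piL HX (splitHX HX q (Sum.inr ⟨i, ⟨c.val, by omega⟩⟩))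
            + Pi.single (⟨i, ⟨n, by omega⟩⟩ : Cuts HX) 1 := by
        funext d
        obtain ⟨i', c'⟩ := d
        rw [Pi.add_apply, Pi.single_apply, Pi.single_apply]
        show (if (⟨i', c'⟩ : Cuts HX) = ⟨i, c⟩ then (1:ZMod 2) else 0)
            = (if i' = i ∧ (c'.val = c.val ∨ c'.val + 1 = c.val) then (1:ZMod 2) else 0)
              + (if (⟨i', c'⟩ : Cuts HX) = ⟨i, ⟨n, by omega⟩⟩ then (1:ZMod 2) else 0)
        simp only [cuts_mk_eq]
        rcases eq_or_ne i' i with rfl | hi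
        · simp only [eq_self_iff_true, true_and]
          split_ifs <;> first | decide | (exfalso; omega)
        · simp [hi]
      rw [heq]
      exact Submodule.add_mem _ hrow hprev
  exact main c.val i c rfl


lemma map_top_piL (hinj : ∀ i, Function.Injective (q i)) :
    Submodule.map (piL HX) (Submodule.span (ZMod 2) (Set.range (splitHX HX q))) = ⊤ := by
  refine top_unique ?_
  rw [← (Pi.basisFun (ZMod 2) (Cuts HX)).span_eq, Submodule.span_le]
  rintro _ ⟨c, rfl⟩
  rw [Pi.basisFun_apply]
  obtain ⟨i, c⟩ := c
  exact single_mem_map HX q i c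

/-- the row used in the upper-bound counting -/
def tRow (c : Cuts HX) : SplitQ HX → ZMod 2 :=
  splitHX HX q (Sum.inr ⟨c.1, ⟨c.2.val + 1, by have := c.1.2; have := c.2.isLt; omega⟩⟩)

lemma rank_splitHX (hinj : ∀ i, Function.Injective (q i))
    (hrange : ∀ i p, HX i.1 p ≠ 0 ↔ p ∈ Set.range (q i)) :
    (splitHX HX q).rank = HX.rank + Fintype.card (Cuts HX) := by
  classical
  set V := Submodule.span (ZMod 2) (Set.range (splitHX HX q)) with hV
  set W := Submodule.span (ZMod 2) (Set.range HX) with hW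
  have hPV : Submodule.map (iotaL HX) W ≤ V := by
    rw [hW, Submodule.map_span, Submodule.span_le]
    rintro _ ⟨_, ⟨i, rfl⟩, rfl⟩
    exact iota_row_mem HX q hinj hrange i
  have hWrank : Module.finrank (ZMod 2) ↥(Submodule.map (iotaL HX) W) = HX.rank := by
    rw [rank_eq_row_span]
    exact (LinearEquiv.finrank_eq
      (Submodule.equivMapOfInjective _ (iotaL_inj HX) W)).symm
  -- lower bound
  have hlow : HX.rank + Fintype.card (Cuts HX) ≤ Module.finrank (ZMod 2) ↥V := by
    have hrn := LinearMap.finrank_range_add_finrank_ker ((piL HX).domRestrict V)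
    rw [LinearMap.range_domRestrict, map_top_piL HX q hinj, finrank_top,
      Module.finrank_fintype_fun_eq_card] at hrn
    have hker : HX.rank ≤ Module.finrank (ZMod 2) ↥(LinearMap.ker ((piL HX).domRestrict V)) := by
      rw [LinearMap.ker_domRestrict]
      have h2 : Submodule.map (iotaL HX) W ≤ LinearMap.ker (piL HX) := by
        rintro _ ⟨f, _, rfl⟩
        exact piL_iotaL HX f
      calc HX.rank = Module.finrank (ZMod 2) ↥(Submodule.map (iotaL HX) W) := hWrank.symm
        _ = Module.finrank (ZMod 2)
            ↥((Submodule.map (iotaL HX) W).comap V.subtype) :=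
          (LinearEquiv.finrank_eq (Submodule.comapSubtypeEquivOfLe hPV)).symm
        _ ≤ Module.finrank (ZMod 2) ↥((LinearMap.ker (piL HX)).comap V.subtype) :=
          Submodule.finrank_mono (Submodule.comap_mono h2)
    omega
  -- upper bound
  have hsplit : V = Submodule.map (iotaL HX) W ⊔
      Submodule.span (ZMod 2) (Set.range (tRow HX q)) := by
    refine le_antisymm ?_ (sup_le hPV ?_)
    · rw [hV, Submodule.span_le]
      rintro _ ⟨r, rfl⟩
      cases r with
      | inl i =>
        have heq : splitHX HX q (Sum.inl i) = iotaL HX (HX i.1) := by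
          funext j; cases j <;> rfl
        rw [heq]
        exact Submodule.mem_sup_left ⟨HX i.1, Submodule.subset_span ⟨i.1, rfl⟩, rfl⟩
      | inr ir =>
        obtain ⟨i, r⟩ := ir
        have hw := i.2
        by_cases hr : r.val = 0
        · -- row 0 = iota (HX i) + sum of tRows of block i
          have hsum := sum_block HX q hinj hrange i
          have hre : ∀ x : SplitQ HX → ZMod 2, x + x = 0 := by
            intro x; funext j
            exact CharTwo.add_self_eq_zero _
          have hbij : ∑ c : Fin (wt (HX i.1) - 3), tRow HX q ⟨i, c⟩
              = ∑ r' ∈ Finset.univ.erase r,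
                  splitHX HX q (Sum.inr ⟨i, r'⟩) := by
            refine Finset.sum_nbij' (fun c => ⟨c.val + 1, by have := c.isLt; omega⟩)
              (fun r' => ⟨r'.val - 1, by have := r'.isLt; omega⟩) ?_ ?_ ?_ ?_ ?_
            · intro c _
              simp [Finset.mem_erase, Fin.ext_iff, hr]
            · intro r' hr'
              simp
            · intro c _
              simp [Fin.ext_iff]
            · intro r' hr'
              rw [Finset.mem_erase] at hr'
              have hne : r'.val ≠ 0 := fun h => hr'.1 (Fin.ext (h.trans hr.symm))
              simp only [Fin.ext_iff]
              show r'.val - 1 + 1 = r'.val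
              omega
            · intro c _
              rfl
          have hadd : splitHX HX q (Sum.inr ⟨i, r⟩)
              + ∑ c : Fin (wt (HX i.1) - 3), tRow HX q ⟨i, c⟩
              = iotaL HX (HX i.1) := by
            rw [hbij, ← hsum]
            exact Finset.add_sum_erase Finset.univ
              (fun r' => splitHX HX q (Sum.inr ⟨i, r'⟩)) (Finset.mem_univ r)
          have : splitHX HX q (Sum.inr ⟨i, r⟩)
              = iotaL HX (HX i.1) + ∑ c : Fin (wt (HX i.1) - 3), tRow HX q ⟨i, c⟩ := by
            have h3 := congrArg
              (· + ∑ c : Fin (wt (HX i.1) - 3), tRow HX q ⟨i, c⟩) hadd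
            simp only [add_assoc, hre, add_zero] at h3
            exact h3
          rw [this]
          refine Submodule.add_mem _
            (Submodule.mem_sup_left ⟨HX i.1, Submodule.subset_span ⟨i.1, rfl⟩, rfl⟩)
            (Submodule.sum_mem _ fun c _ =>
              Submodule.mem_sup_right (Submodule.subset_span ⟨⟨i, c⟩, rfl⟩))
        · have hlt := r.isLt
          have hfr : (⟨r.val - 1 + 1, by omega⟩ : Fin (wt (HX i.1) - 2)) = r :=
            Fin.ext (by show r.val - 1 + 1 = r.val; omega)
          have heq : splitHX HX q (Sum.inr ⟨i, r⟩)
              = tRow HX q ⟨i, ⟨r.val - 1, by omega⟩⟩ :=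
            (congrArg (fun x => splitHX HX q (Sum.inr ⟨i, x⟩)) hfr).symm
          rw [heq]
          exact Submodule.mem_sup_right (Submodule.subset_span ⟨_, rfl⟩)
    · rw [Submodule.span_le]
      rintro _ ⟨c, rfl⟩
      exact Submodule.subset_span ⟨_, rfl⟩
  have hup : Module.finrank (ZMod 2) ↥V ≤ HX.rank + Fintype.card (Cuts HX) := by
    rw [hsplit]
    have h1 := Submodule.finrank_sup_add_finrank_inf_eq
      (Submodule.map (iotaL HX) W) (Submodule.span (ZMod 2) (Set.range (tRow HX q)))
    have h2 : Module.finrank (ZMod 2)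
        ↥(Submodule.span (ZMod 2) (Set.range (tRow HX q))) ≤ Fintype.card (Cuts HX) := by
      refine (finrank_span_le_card _).trans ?_
      rw [Set.toFinset_card]
      exact Fintype.card_range_le _
    omega
  rw [rank_eq_row_span, ← hV]
  omega


lemma rank_splitHZ : (splitHZ HX HZ q).rank = HZ.rank := by
  classical
  let A : Matrix (Fin N) (SplitQ HX) (ZMod 2) := fun p j =>
    match j with
    | Sum.inl p' => if p = p' then 1 else 0
    | Sum.inr ⟨i, m⟩ =>
        ∑ a : Fin (wt (HX i.1)), if a.val ≤ m.val + 1 ∧ q i a = p then 1 else 0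
  have hA : splitHZ HX HZ q = HZ * A := by
    funext R j
    cases j with
    | inl p' =>
      show HZ R p' = _
      rw [Matrix.mul_apply]
      have hAe : ∀ p, A p (Sum.inl p') = if p = p' then 1 else 0 := fun _ => rfl
      simp only [hAe, mul_ite, mul_one, mul_zero]
      rw [Finset.sum_ite_eq' Finset.univ p' (fun p => HZ R p)]
      simp
    | inr im =>
      obtain ⟨i, m⟩ := im
      show (∑ a : Fin (wt (HX i.1)), if a.val ≤ m.val + 1 then HZ R (q i a) else 0) = _
      rw [Matrix.mul_apply]
      have hAe : ∀ p, A p (Sum.inr ⟨i, m⟩)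
          = ∑ a : Fin (wt (HX i.1)), if a.val ≤ m.val + 1 ∧ q i a = p then (1:ZMod 2) else 0 :=
        fun _ => rfl
      simp only [hAe, Finset.mul_sum, mul_ite, mul_one, mul_zero]
      rw [Finset.sum_comm]
      refine Finset.sum_congr rfl fun a _ => ?_
      by_cases ha : a.val ≤ m.val + 1
      · simp only [ha, true_and, if_pos]
        rw [Finset.sum_ite_eq Finset.univ (q i a) (fun p => HZ R p)]
        simp
      · simp [ha]
  let B : Matrix (SplitQ HX) (Fin N) (ZMod 2) := fun j p =>
    match j with
    | Sum.inl p' => if p' = p then 1 else 0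
    | Sum.inr _ => 0
  have hB : HZ = (splitHZ HX HZ q) * B := by
    funext R p
    rw [Matrix.mul_apply, Fintype.sum_sum_type]
    have h1 : ∀ p' : Fin N,
        splitHZ HX HZ q R (Sum.inl p') * B (Sum.inl p') p
        = if p' = p then HZ R p' else 0 := by
      intro p'
      show HZ R p' * (if p' = p then 1 else 0) = _
      rw [mul_ite, mul_one, mul_zero]
    have h2 : ∀ c, splitHZ HX HZ q R (Sum.inr c) * B (Sum.inr c) p = 0 := by
      intro c
      show _ * 0 = 0
      rw [mul_zero]
    simp only [h1, h2, Finset.sum_const_zero, add_zero]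
    rw [Finset.sum_ite_eq' Finset.univ p (fun p' => HZ R p')]
    simp
  refine le_antisymm ?_ ?_
  · rw [hA]
    exact Matrix.rank_mul_le_left HZ A
  · conv_lhs => rw [hB]
    exact Matrix.rank_mul_le_left (splitHZ HX HZ q) B

lemma rank_add_rank_le (hCSS : HX * HZ.transpose = 0) : HX.rank + HZ.rank ≤ N := by
  have h1 : LinearMap.range (HZ.transpose.mulVecLin) ≤ LinearMap.ker (HX.mulVecLin) := by
    rintro _ ⟨v, rfl⟩
    rw [LinearMap.mem_ker]
    show HX.mulVec (HZᵀ.mulVec v) = 0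
    rw [Matrix.mulVec_mulVec, hCSS, Matrix.zero_mulVec]
  have h2 := LinearMap.finrank_range_add_finrank_ker (HX.mulVecLin)
  rw [Module.finrank_fintype_fun_eq_card, Fintype.card_fin] at h2
  have h3 : HZ.rank ≤ Module.finrank (ZMod 2) ↥(LinearMap.ker HX.mulVecLin) := by
    rw [← Matrix.rank_transpose HZ]
    exact Submodule.finrank_mono h1
  have h4 : HX.rank = Module.finrank (ZMod 2) ↥(LinearMap.range HX.mulVecLin) := rfl
  omega

end Aux

/-- The full X-type generator splitting procedure does not change the
number of logical qubits: `K̃ = Ñ − rank(H̃_X) − rank(H̃_Z)` equals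
`K = N − rank(H_X) − rank(H_Z)`. -/
theorem stmt3 (HX : Matrix (Fin nX) (Fin N) (ZMod 2)) (HZ : Matrix (Fin nZ) (Fin N) (ZMod 2))
    (hCSS : HX * HZ.transpose = 0)
    (q : ∀ i : {i : Fin nX // 4 ≤ wt (HX i)}, Fin (wt (HX i.1)) → Fin N)
    (hinj : ∀ i, Function.Injective (q i))
    (hrange : ∀ i p, HX i.1 p ≠ 0 ↔ p ∈ Set.range (q i)) :
    Fintype.card (SplitQ HX) - (splitHX HX q).rank - (splitHZ HX HZ q).rank
      = N - HX.rank - HZ.rank := by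
  have h1 := rank_splitHX HX q hinj hrange
  have h2 := rank_splitHZ HX HZ q
  have h3 := rank_add_rank_le HX HZ hCSS
  have h4 : Fintype.card (SplitQ HX) = N + Fintype.card (Cuts HX) := by
    rw [Fintype.card_sum, Fintype.card_fin]
  omega
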